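/- Let C ≤ F be a k-dimensional code, n = dim F, and A a collection of subspaces of F closed under the bijection A ↦ A^⊥ between anticodes and dual anticodes. For a ∈ {0,...,n} and j ∈ {1,...,k}, the generalized tensor binomial moments B_a^{(j)}(C) = Σ_{A ∈ A, dim A = a} [dim(C∩A) choose j]_q satisfy the MacWilliams-type identity B_a^{(j)}(C) = Σ_{p=0}^{j} q^{p(k+a−n−j+p)} [k+a−n choose j−p]_q · B̄_{n−a}^{(p)}(C^⊥), where B̄_{n−a}^{(p)}(C^⊥) = Σ_{A ∈ A, dim A = a} [dim(C^⊥ ∩ A^⊥) choose p]_q. -/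

import Mathlib

open scoped Classical

noncomputable section

namespace TensorCodes

/-- The Gaussian (`q`-binomial) coefficient for integer arguments, following the
definition in the paper. -/
def qbin (q : ℚ) (a b : ℤ) : ℚ :=
  if b < 0 then 0
  else if b = 0 then 1
  else if a < 0 then
    (-1) ^ b.toNat * q ^ (a * b - b * (b - 1) / 2) *
      ∏ i ∈ Finset.range b.toNat, (q ^ (-a + b - 1 - (i : ℤ)) - 1) / (q ^ ((i : ℤ) + 1) - 1)
  else if a < b then 0
  else ∏ i ∈ Finset.range b.toNat, (q ^ (a - (i : ℤ)) - 1) / (q ^ ((i : ℤ) + 1) - 1)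

variable {K : Type} [Field K] [Fintype K] {r : ℕ} {n : Fin r → ℕ}

/-- A simple (rank-one) tensor `u⁽¹⁾ ⊗ ⋯ ⊗ u⁽ʳ⁾`, in the identification of
`𝔽_q^{n_1} ⊗ ⋯ ⊗ 𝔽_q^{n_r}` with the space of `r`-dimensional arrays. -/
def simpleTensor (u : ∀ i, Fin (n i) → K) : ((i : Fin r) → Fin (n i)) → K :=
  fun J => ∏ i, u i (J i)

/-- The tensor product `U₁ ⊗ ⋯ ⊗ U_r` of subspaces `U i ≤ 𝔽_q^{n_i}`, identified with the
subspace of the array space spanned by the corresponding simple tensors. -/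
def tp (U : ∀ i, Submodule K (Fin (n i) → K)) :
    Submodule K (((i : Fin r) → Fin (n i)) → K) :=
  Submodule.span K {X | ∃ u : ∀ i, Fin (n i) → K, (∀ i, u i ∈ U i) ∧ X = simpleTensor u}

/-- The dual (orthogonal complement) of a tensor code with respect to the nondegenerate
bilinear form `X * Y = ∑_J X_J Y_J`. -/
def tdual (C : Submodule K (((i : Fin r) → Fin (n i)) → K)) :
    Submodule K (((i : Fin r) → Fin (n i)) → K) where
  carrier := {X | ∀ Y ∈ C, ∑ J, X J * Y J = 0}
  add_mem' := by
    intro a b ha hb Y hY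
    have h : ∑ J, (a J * Y J + b J * Y J) = 0 := by
      rw [Finset.sum_add_distrib, ha Y hY, hb Y hY, add_zero]
    simpa [add_mul] using h
  zero_mem' := by intro Y hY; simp
  smul_mem' := by
    intro c a ha Y hY
    have h := ha Y hY
    simp only [Pi.smul_apply, smul_eq_mul, mul_assoc]
    rw [← Finset.mul_sum, h, mul_zero]

/-- The orthogonal complement of a subspace of `𝔽_q^m` with respect to the dot product. -/
def vdual {m : ℕ} (U : Submodule K (Fin m → K)) : Submodule K (Fin m → K) where
  carrier := {x | ∀ y ∈ U, ∑ t, x t * y t = 0}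
  add_mem' := by
    intro a b ha hb y hy
    have h : ∑ t, (a t * y t + b t * y t) = 0 := by
      rw [Finset.sum_add_distrib, ha y hy, hb y hy, add_zero]
    simpa [add_mul] using h
  zero_mem' := by intro y hy; simp
  smul_mem' := by
    intro c a ha y hy
    have h := ha y hy
    simp only [Pi.smul_apply, smul_eq_mul, mul_assoc]
    rw [← Finset.mul_sum, h, mul_zero]

/-- A subspace is perfect if it is spanned by the simple (rank-one) tensors it contains. -/
def IsPerfect (A : Submodule K (((i : Fin r) → Fin (n i)) → K)) : Prop :=
  A = Submodule.span K ((A : Set (((i : Fin r) → Fin (n i)) → K)) ∩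
    {X | ∃ u : ∀ i, Fin (n i) → K, X = simpleTensor u})

/-- The tensor rank of an `r`-tensor: the least number of simple tensors summing to it. -/
def trank (X : ((i : Fin r) → Fin (n i)) → K) : ℕ :=
  sInf {R | ∃ u : Fin R → ∀ i, Fin (n i) → K, X = ∑ s, simpleTensor (u s)}

/-- The minimum tensor-rank distance of a (nonzero) tensor code. -/
def minDist (C : Submodule K (((i : Fin r) → Fin (n i)) → K)) : ℕ :=
  sInf {d | ∃ X ∈ C, X ≠ (0 : ((i : Fin r) → Fin (n i)) → K) ∧ trank X = d}

/-- The tensor rank of a tensor code: the minimum dimension of a perfect space containing it. -/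
def trk (C : Submodule K (((i : Fin r) → Fin (n i)) → K)) : ℕ :=
  sInf {a | ∃ A : Submodule K (((i : Fin r) → Fin (n i)) → K),
    IsPerfect A ∧ C ≤ A ∧ Module.finrank K ↥A = a}

/-- The `j`-th generalized tensor weight of `C` with respect to a collection `𝒜` of
anticodes:  the minimum dimension of a member of `𝒜` meeting `C` in dimension at least `j`. -/
def genW {V : Type} [AddCommGroup V] [Module K V] (𝒜 : Set (Submodule K V))
    (C : Submodule K V) (j : ℕ) : ℕ :=
  sInf {a | ∃ A ∈ 𝒜, Module.finrank K ↥A = a ∧ j ≤ Module.finrank K ↥(C ⊓ A)}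



section QBinomAux

/-! ### The uniform product form of the Gaussian binomial coefficient -/

/-- Numerator of the uniform product form. -/
def Nq (q : ℚ) (a : ℤ) (b : ℕ) : ℚ := ∏ i ∈ Finset.range b, (q ^ (a - (i : ℤ)) - 1)

/-- Denominator of the uniform product form. -/
def Dq (q : ℚ) (b : ℕ) : ℚ := ∏ i ∈ Finset.range b, (q ^ ((i : ℤ) + 1) - 1)

/-- The uniform product form of the Gaussian binomial coefficient. -/
def P (q : ℚ) (a : ℤ) (b : ℕ) : ℚ := Nq q a b / Dq q b

variable {q : ℚ}

lemma q0 (hq : 1 < q) : q ≠ 0 := by positivity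

lemma Dq_ne_zero (hq : 1 < q) (b : ℕ) : Dq q b ≠ 0 := by
  refine Finset.prod_ne_zero_iff.mpr fun i _ => ?_
  have : (1:ℚ) < q ^ ((i : ℤ) + 1) := one_lt_zpow₀ hq (by positivity)
  linarith

lemma P_zero (a : ℤ) : P q a 0 = 1 := by simp [P, Nq, Dq]

lemma zpow_pair (hq : 1 < q) (x y : ℤ) : q ^ x * q ^ y = q ^ (x + y) :=
  (zpow_add₀ (q0 hq) x y).symm

lemma zpow_sum (hq : 1 < q) {ι : Type*} (s : Finset ι) (f : ι → ℤ) :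
    q ^ (∑ i ∈ s, f i) = ∏ i ∈ s, q ^ f i := by
  induction s using Finset.induction with
  | empty => simp
  | insert x s h ih => rw [Finset.sum_insert h, Finset.prod_insert h, zpow_add₀ (q0 hq), ih]

lemma qbin_eq_P (hq : 1 < q) (a : ℤ) (b : ℕ) : qbin q a (b : ℤ) = P q a b := by
  rcases Nat.eq_zero_or_pos b with hb | hb
  · subst hb; simp [qbin, P_zero]
  have hbne : (b : ℤ) ≠ 0 := by exact_mod_cast hb.ne'
  rcases lt_or_ge a 0 with ha | ha
  · rw [qbin, if_neg (by omega), if_neg hbne, if_pos ha]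
    have htoNat : ((b : ℤ)).toNat = b := Int.toNat_natCast b
    rw [htoNat, Finset.prod_div_distrib]
    have hnum : (-1:ℚ) ^ b * q ^ (a * b - (b:ℤ) * ((b:ℤ) - 1) / 2) *
        ∏ i ∈ Finset.range b, (q ^ (-a + (b:ℤ) - 1 - (i:ℤ)) - 1) = Nq q a b := by
      have hrefl : (∏ i ∈ Finset.range b, (q ^ (-a + (b:ℤ) - 1 - (i:ℤ)) - 1))
          = ∏ i ∈ Finset.range b, (q ^ (-a + (i:ℤ)) - 1) := by
        rw [← Finset.prod_range_reflect]
        refine Finset.prod_congr rfl fun i hi => ?_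
        have hib : i < b := Finset.mem_range.mp hi
        have : ((b - 1 - i : ℕ) : ℤ) = (b:ℤ) - 1 - (i:ℤ) := by omega
        rw [this]
        congr 1
        ring_nf
      have hsum : ∑ i ∈ Finset.range b, (a - (i:ℤ)) = a * b - (b:ℤ) * ((b:ℤ) - 1) / 2 := by
        have h := Finset.sum_range_id_mul_two b
        zify [hb] at h
        rw [Finset.sum_sub_distrib, Finset.sum_const, Finset.card_range, ← h,
          Int.mul_ediv_cancel _ (by norm_num : (2:ℤ) ≠ 0), nsmul_eq_mul]
        ring
      have hfac : ∀ i ∈ Finset.range b, (q ^ (a - (i:ℤ)) - 1)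
          = (-1) * q ^ (a - (i:ℤ)) * (q ^ (-a + (i:ℤ)) - 1) := by
        intro i _
        have h1 : q ^ (a - (i:ℤ)) * q ^ (-a + (i:ℤ)) = 1 := by
          rw [zpow_pair hq, show a - (i:ℤ) + (-a + (i:ℤ)) = 0 by ring, zpow_zero]
        linear_combination h1
      rw [hrefl, Nq, Finset.prod_congr rfl hfac, Finset.prod_mul_distrib,
        Finset.prod_mul_distrib, Finset.prod_const, Finset.card_range,
        ← zpow_sum hq, hsum]
    rw [P, ← hnum, mul_div_assoc]
    rfl
  · rcases lt_or_ge a (b : ℤ) with hab | hab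
    · rw [qbin, if_neg (by omega), if_neg hbne, if_neg (by omega), if_pos hab]
      have haN : a.toNat < b := by omega
      rw [P, Nq, Finset.prod_eq_zero (Finset.mem_range.mpr haN) (by
        rw [Int.toNat_of_nonneg ha, sub_self, zpow_zero, sub_self]), zero_div]
    · rw [qbin, if_neg (by omega), if_neg hbne, if_neg (by omega), if_neg (by omega)]
      rw [P, Nq, Dq, ← Finset.prod_div_distrib, Int.toNat_natCast]

lemma Nq_succ (a : ℤ) (c : ℕ) : Nq q a (c+1) = Nq q a c * (q ^ (a - (c:ℤ)) - 1) :=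
  Finset.prod_range_succ _ _

lemma Nq_succ' (a : ℤ) (c : ℕ) : Nq q a (c+1) = Nq q (a-1) c * (q ^ a - 1) := by
  rw [Nq, Finset.prod_range_succ']
  congr 1
  · refine Finset.prod_congr rfl fun i _ => ?_
    congr 1
    push_cast
    ring
  · norm_num

lemma Dq_succ (c : ℕ) : Dq q (c+1) = Dq q c * (q ^ ((c:ℤ) + 1) - 1) :=
  Finset.prod_range_succ _ _

lemma e_ne_zero (hq : 1 < q) (c : ℕ) : q ^ ((c:ℤ) + 1) - 1 ≠ 0 := by
  have : (1:ℚ) < q ^ ((c:ℤ) + 1) := one_lt_zpow₀ hq (by positivity)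
  linarith

lemma pascal2 (hq : 1 < q) (a : ℤ) (c : ℕ) :
    P q a (c+1) = q ^ (a - 1 - (c:ℤ)) * P q (a-1) c + P q (a-1) (c+1) := by
  rw [P, P, P, Nq_succ' a c, Nq_succ (a-1) c, Dq_succ]
  have hqa : q ^ a = q ^ ((c:ℤ) + 1) * q ^ (a - 1 - (c:ℤ)) := by
    rw [zpow_pair hq]
    congr 1
    ring
  rw [hqa]
  have hD := Dq_ne_zero hq c
  have hE := e_ne_zero hq c
  field_simp
  ring

lemma P_left_zero (hq : 1 < q) (p : ℕ) (hp : 0 < p) : P q 0 p = 0 := by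
  rw [P, Nq, Finset.prod_eq_zero (Finset.mem_range.mpr hp) (by norm_num), zero_div]

/-- The `q`-Vandermonde identity in the form needed for the MacWilliams identities. -/
lemma vdm (hq : 1 < q) (s : ℤ) : ∀ (m j : ℕ), P q ((m:ℤ) + s) j
    = ∑ p ∈ Finset.range (j+1), q ^ ((p:ℤ) * (s - (j:ℤ) + (p:ℤ))) * P q s (j - p) * P q m p := by
  intro m
  induction m with
  | zero =>
    intro j
    rw [Finset.sum_eq_single 0]
    · simp [P_zero]
    · intro p hp hp0
      have h0 : P q ((0:ℕ):ℤ) p = 0 := by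
        rw [Nat.cast_zero]
        exact P_left_zero hq p (Nat.pos_of_ne_zero hp0)
      rw [h0, mul_zero]
    · intro h
      exact absurd (Finset.mem_range.mpr (Nat.succ_pos j)) h
  | succ m IH =>
    intro j
    cases j with
    | zero => simp [P_zero]
    | succ c =>
      have hcast : ((m+1:ℕ):ℤ) + s = ((m:ℤ) + s + 1) := by push_cast; ring
      rw [hcast, pascal2 hq ((m:ℤ) + s + 1) c]
      have h1 : (m:ℤ) + s + 1 - 1 = (m:ℤ) + s := by ring
      rw [h1, IH c, IH (c+1)]
      conv_rhs => rw [Finset.sum_range_succ' _ (c+1)]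
      have hterm : ∀ t ∈ Finset.range (c+1),
          q ^ (((t+1:ℕ):ℤ) * (s - ((c+1:ℕ):ℤ) + ((t+1:ℕ):ℤ))) * P q s ((c+1) - (t+1)) * P q ((m+1:ℕ):ℤ) (t+1)
          = q ^ ((m:ℤ) + s - (c:ℤ)) * (q ^ ((t:ℤ) * (s - (c:ℤ) + (t:ℤ))) * P q s (c - t) * P q ((m:ℕ):ℤ) t)
            + q ^ (((t+1:ℕ):ℤ) * (s - ((c+1:ℕ):ℤ) + ((t+1:ℕ):ℤ))) * P q s ((c+1) - (t+1)) * P q ((m:ℕ):ℤ) (t+1) := by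
        intro t ht
        have hc2 : ((m+1:ℕ):ℤ) = (m:ℤ) + 1 := by push_cast; ring
        rw [hc2, pascal2 hq ((m:ℤ)+1) t]
        have h3 : (m:ℤ) + 1 - 1 = (m:ℤ) := by ring
        rw [h3, show (c+1) - (t+1) = c - t from Nat.succ_sub_succ c t]
        have key : q ^ ((m:ℤ) + s - (c:ℤ)) * q ^ ((t:ℤ) * (s - (c:ℤ) + (t:ℤ)))
            = q ^ (((t+1:ℕ):ℤ) * (s - ((c+1:ℕ):ℤ) + ((t+1:ℕ):ℤ))) * q ^ ((m:ℤ) - (t:ℤ)) := by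
          rw [zpow_pair hq, zpow_pair hq]
          congr 1
          push_cast
          ring
        linear_combination (P q s (c - t) * P q ((m:ℕ):ℤ) t) * key.symm
      rw [Finset.sum_congr rfl hterm, Finset.sum_add_distrib, ← Finset.mul_sum]
      conv_rhs => rw [add_assoc]
      congr 1
      exact Finset.sum_range_succ' _ (c+1)

end QBinomAux

section DualDimAux

open Module

lemma mem_tdual' (C : Submodule K (((i : Fin r) → Fin (n i)) → K)) (X) :
    X ∈ tdual C ↔ ∀ Y ∈ C, ∑ J, X J * Y J = 0 := Iff.rfl

/-- The dot-product bilinear form on the array space. -/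
def dotB : LinearMap.BilinForm K (((i : Fin r) → Fin (n i)) → K) :=
  LinearMap.mk₂ K (fun X Y => ∑ J, X J * Y J)
    (by intro a b c; simp [add_mul, Finset.sum_add_distrib])
    (by intro c a b; simp [Finset.mul_sum, mul_assoc])
    (by intro a b c; simp [mul_add, Finset.sum_add_distrib])
    (by intro c a b; simp [Finset.mul_sum, mul_assoc, mul_left_comm])

lemma dotB_nondeg : (dotB (K := K) (r := r) (n := n)).Nondegenerate := by
  constructor <;>
  · intro X hX
    funext J
    have h := hX (Pi.single J 1)
    simp only [dotB, LinearMap.mk₂_apply] at h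
    rw [Finset.sum_eq_single J (fun b _ hb => by simp [Pi.single_apply, hb]) (by simp)] at h
    simpa using h

lemma tdual_eq_comap (C : Submodule K (((i : Fin r) → Fin (n i)) → K)) :
    tdual C = C.dualAnnihilator.comap
      ((LinearMap.BilinForm.toDual dotB dotB_nondeg :
          (((i : Fin r) → Fin (n i)) → K) ≃ₗ[K] Dual K (((i : Fin r) → Fin (n i)) → K)) :
        (((i : Fin r) → Fin (n i)) → K) →ₗ[K] Dual K (((i : Fin r) → Fin (n i)) → K)) := by
  ext X
  simp only [Submodule.mem_comap, Submodule.mem_dualAnnihilator, mem_tdual']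
  rfl

lemma finrank_tdual (C : Submodule K (((i : Fin r) → Fin (n i)) → K)) :
    finrank K (tdual C) + finrank K C = ∏ i, n i := by
  rw [tdual_eq_comap, Submodule.comap_equiv_eq_map_symm,
    LinearEquiv.finrank_map_eq, ← (Subspace.quotEquivAnnihilator C).finrank_eq,
    Submodule.finrank_quotient_add_finrank]
  rw [Module.finrank_fintype_fun_eq_card, Fintype.card_pi]
  simp

lemma tdual_sup (C A : Submodule K (((i : Fin r) → Fin (n i)) → K)) :
    tdual (C ⊔ A) = tdual C ⊓ tdual A := by
  ext X
  simp only [Submodule.mem_inf, mem_tdual']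
  constructor
  · intro h
    exact ⟨fun Y hY => h Y (Submodule.mem_sup_left hY),
           fun Y hY => h Y (Submodule.mem_sup_right hY)⟩
  · rintro ⟨h1, h2⟩ Y hY
    obtain ⟨y, hy, z, hz, rfl⟩ := Submodule.mem_sup.mp hY
    have : ∑ J, (X J * y J + X J * z J) = 0 := by
      rw [Finset.sum_add_distrib, h1 y hy, h2 z hz, add_zero]
    simpa [mul_add] using this

lemma dim_identity (C A : Submodule K (((i : Fin r) → Fin (n i)) → K)) :
    (finrank K ↥(tdual C ⊓ tdual A) : ℤ)
      = (∏ i, (n i : ℤ)) - finrank K C - finrank K A + finrank K ↥(C ⊓ A) := by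
  have h1 := finrank_tdual (C ⊔ A)
  have h2 := Submodule.finrank_sup_add_finrank_inf_eq C A
  rw [tdual_sup] at h1
  have hcast : ((∏ i, n i : ℕ) : ℤ) = ∏ i, (n i : ℤ) := by push_cast; rfl
  rw [← hcast]
  zify at h2
  omega

end DualDimAux

/-- MacWilliams identities for generalized tensor binomial moments:
`B_a^{(j)}(C) = ∑_{p=0}^{j} q^{p(k+a−n−j+p)} [k+a−n, j−p]_q · B̄_{n−a}^{(p)}(C^⊥)`,
where `B̄_{n−a}^{(p)}(C^⊥) = ∑_{A ∈ 𝒜_a} [dim(C^⊥ ∩ A^⊥), p]_q`. -/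
theorem macwilliams_binomial_moments
    (𝒜 : Finset (Submodule K (((i : Fin r) → Fin (n i)) → K)))
    (hdual : ∀ A ∈ 𝒜, tdual A ∈ 𝒜)
    (C : Submodule K (((i : Fin r) → Fin (n i)) → K))
    (a j : ℕ) (hj1 : 1 ≤ j) (hjk : j ≤ Module.finrank K ↥C) (ha : a ≤ ∏ i, n i) :
    ∑ A ∈ 𝒜.filter (fun A : Submodule K (((i : Fin r) → Fin (n i)) → K) => Module.finrank K ↥A = a),
        qbin (Fintype.card K : ℚ) (Module.finrank K ↥(C ⊓ A) : ℤ) (j : ℤ)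
      = ∑ p ∈ Finset.range (j + 1),
          (Fintype.card K : ℚ) ^
              ((p : ℤ) * ((Module.finrank K ↥C : ℤ) + (a : ℤ)
                - ∏ i, (n i : ℤ) - (j : ℤ) + (p : ℤ)))
            * qbin (Fintype.card K : ℚ)
                ((Module.finrank K ↥C : ℤ) + (a : ℤ) - ∏ i, (n i : ℤ)) ((j : ℤ) - (p : ℤ))
            * ∑ A ∈ 𝒜.filter (fun A : Submodule K (((i : Fin r) → Fin (n i)) → K) => Module.finrank K ↥A = a),
                qbin (Fintype.card K : ℚ)
                  (Module.finrank K ↥(tdual C ⊓ tdual A) : ℤ) (p : ℤ) := by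
  have hq : (1:ℚ) < (Fintype.card K : ℚ) := by exact_mod_cast Fintype.one_lt_card
  set q : ℚ := (Fintype.card K : ℚ) with hqdef
  simp only [Finset.mul_sum]
  rw [Finset.sum_comm]
  refine Finset.sum_congr rfl fun A hA => ?_
  have hAa : Module.finrank K ↥A = a := (Finset.mem_filter.mp hA).2
  have hdim := dim_identity C A
  rw [hAa] at hdim
  have hc : (Module.finrank K ↥(C ⊓ A) : ℤ)
      = (Module.finrank K ↥(tdual C ⊓ tdual A) : ℤ)
        + ((Module.finrank K ↥C : ℤ) + (a : ℤ) - ∏ i, (n i : ℤ)) := by omega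
  calc qbin q (Module.finrank K ↥(C ⊓ A) : ℤ) (j : ℤ)
      = P q ((Module.finrank K ↥(tdual C ⊓ tdual A) : ℤ)
          + ((Module.finrank K ↥C : ℤ) + (a : ℤ) - ∏ i, (n i : ℤ))) j := by
        rw [qbin_eq_P hq, hc]
    _ = ∑ p ∈ Finset.range (j+1),
          q ^ ((p:ℤ) * (((Module.finrank K ↥C : ℤ) + (a : ℤ) - ∏ i, (n i : ℤ)) - (j:ℤ) + (p:ℤ)))
            * P q ((Module.finrank K ↥C : ℤ) + (a : ℤ) - ∏ i, (n i : ℤ)) (j - p)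
            * P q (Module.finrank K ↥(tdual C ⊓ tdual A)) p :=
        vdm hq _ _ j
    _ = ∑ p ∈ Finset.range (j + 1),
          q ^ ((p : ℤ) * ((Module.finrank K ↥C : ℤ) + (a : ℤ) - ∏ i, (n i : ℤ) - (j : ℤ) + (p : ℤ)))
            * qbin q ((Module.finrank K ↥C : ℤ) + (a : ℤ) - ∏ i, (n i : ℤ)) ((j : ℤ) - (p : ℤ))
            * qbin q (Module.finrank K ↥(tdual C ⊓ tdual A) : ℤ) (p : ℤ) := by
        refine Finset.sum_congr rfl fun p hp => ?_
        have hpj : p ≤ j := by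
          have := Finset.mem_range.mp hp
          omega
        rw [show (j:ℤ) - (p:ℤ) = ((j - p : ℕ) : ℤ) by omega, qbin_eq_P hq, qbin_eq_P hq]


end TensorCodes
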